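/- Let Ω ⊆ ℝ^N be Lebesgue measurable of finite Lebesgue measure and let N be the north pole of the unit sphere S^N ⊂ ℝ^{N+1}. Then for every r < -N: the upper spherical Minkowski content satisfies M̄_S^r(N, Ψ(Ω)) ≤ 2^r M̄^r(∞,Ω), and the lower spherical content satisfies M̲_S^r(N, Ψ(Ω)) ≤ 2^r M̲^r(∞,Ω), where Ψ is the stereographic projection. -/

import Mathlib

open MeasureTheory Filter Set
open scoped ENNReal NNReal Topology

noncomputable section

/-- The `[a,b)`-shell centered at the origin in `ℝ^N`. -/
def shell (N : ℕ) (a b : ℝ) : Set (EuclideanSpace ℝ (Fin N)) :=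
  {x | a ≤ ‖x‖ ∧ ‖x‖ < b}

/-- The complement of the open ball `B_t(0)` in `ℝ^N`. -/
def farBall (N : ℕ) (t : ℝ) : Set (EuclideanSpace ℝ (Fin N)) :=
  {x | t ≤ ‖x‖}

/-- Upper φ-shell Minkowski content of `Ω` at infinity. -/
def upperShellContent (N : ℕ) (Ω : Set (EuclideanSpace ℝ (Fin N))) (φ r : ℝ) : ℝ≥0∞ :=
  Filter.limsup (fun t : ℝ =>
    volume (shell N t (φ * t) ∩ Ω) / ENNReal.ofReal (t ^ ((N : ℝ) + r))) Filter.atTop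

/-- Lower φ-shell Minkowski content of `Ω` at infinity. -/
def lowerShellContent (N : ℕ) (Ω : Set (EuclideanSpace ℝ (Fin N))) (φ r : ℝ) : ℝ≥0∞ :=
  Filter.liminf (fun t : ℝ =>
    volume (shell N t (φ * t) ∩ Ω) / ENNReal.ofReal (t ^ ((N : ℝ) + r))) Filter.atTop

/-- Upper Minkowski content of `Ω` at infinity. -/
def upperContent (N : ℕ) (Ω : Set (EuclideanSpace ℝ (Fin N))) (r : ℝ) : ℝ≥0∞ :=
  Filter.limsup (fun t : ℝ =>
    volume (farBall N t ∩ Ω) / ENNReal.ofReal (t ^ ((N : ℝ) + r))) Filter.atTop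

/-- Lower Minkowski content of `Ω` at infinity. -/
def lowerContent (N : ℕ) (Ω : Set (EuclideanSpace ℝ (Fin N))) (r : ℝ) : ℝ≥0∞ :=
  Filter.liminf (fun t : ℝ =>
    volume (farBall N t ∩ Ω) / ENNReal.ofReal (t ^ ((N : ℝ) + r))) Filter.atTop

/-- Upper φ-shell Minkowski dimension of `Ω` at infinity, as an extended real. -/
def upperShellDim (N : ℕ) (Ω : Set (EuclideanSpace ℝ (Fin N))) (φ : ℝ) : EReal :=
  sInf ((fun r : ℝ => (r : EReal)) '' {r : ℝ | upperShellContent N Ω φ r = 0})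

/-- Lower φ-shell Minkowski dimension of `Ω` at infinity, as an extended real. -/
def lowerShellDim (N : ℕ) (Ω : Set (EuclideanSpace ℝ (Fin N))) (φ : ℝ) : EReal :=
  sInf ((fun r : ℝ => (r : EReal)) '' {r : ℝ | lowerShellContent N Ω φ r = 0})

/-- The spherical volume of the image of a set `E ⊆ ℝ^N` under stereographic projection,
expressed by the change-of-variables formula `|Ψ(E)|_S = ∫_E 2^N/(1+|x|²)^N dx`. -/
def sphericalVolume (N : ℕ) (E : Set (EuclideanSpace ℝ (Fin N))) : ℝ≥0∞ :=
  ∫⁻ x in E, ENNReal.ofReal ((2 : ℝ) ^ (N : ℝ) / (1 + ‖x‖ ^ 2) ^ (N : ℝ))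

/-- Upper spherical Minkowski content of the north pole relative to `Ψ(Ω)`, using the identity
`Ψ⁻¹({N}_{δ,S} ∩ Ψ(Ω)) = B_{cot(δ/2)}(0)ᶜ ∩ Ω`. -/
def upperSphericalContent (N : ℕ) (Ω : Set (EuclideanSpace ℝ (Fin N))) (r : ℝ) : ℝ≥0∞ :=
  Filter.limsup (fun δ : ℝ =>
    sphericalVolume N (farBall N (Real.cot (δ / 2)) ∩ Ω) / ENNReal.ofReal (δ ^ ((N : ℝ) - r)))
    (nhdsWithin 0 (Ioi 0))

/-- Lower spherical Minkowski content of the north pole relative to `Ψ(Ω)`. -/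
def lowerSphericalContent (N : ℕ) (Ω : Set (EuclideanSpace ℝ (Fin N))) (r : ℝ) : ℝ≥0∞ :=
  Filter.liminf (fun δ : ℝ =>
    sphericalVolume N (farBall N (Real.cot (δ / 2)) ∩ Ω) / ENNReal.ofReal (δ ^ ((N : ℝ) - r)))
    (nhdsWithin 0 (Ioi 0))

namespace SphAux

lemma sphVol_le (N : ℕ) (E : Set (EuclideanSpace ℝ (Fin N))) (t : ℝ) (ht : 0 ≤ t) :
    sphericalVolume N (farBall N t ∩ E) ≤
      ENNReal.ofReal ((2:ℝ)^(N:ℝ) / (1 + t^2)^(N:ℝ)) * volume (farBall N t ∩ E) := by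
  rw [sphericalVolume, ← setLIntegral_const]
  refine setLIntegral_mono measurable_const fun x hx => ?_
  apply ENNReal.ofReal_le_ofReal
  have hx1 : t ≤ ‖x‖ := hx.1
  gcongr

lemma keyIneq (N : ℕ) (r : ℝ) (hr : r < -(N:ℝ)) {u : ℝ} (hu : 0 < u) (hu2 : u < Real.pi/2) :
    (2:ℝ)^(N:ℝ) / (1 + Real.cot u ^ 2)^(N:ℝ) / (2*u)^((N:ℝ)-r) ≤
      Real.cos u ^ ((N:ℝ)+r) * ((2:ℝ)^r / Real.cot u ^ ((N:ℝ)+r)) := by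
  have hs : 0 < Real.sin u := Real.sin_pos_of_pos_of_lt_pi hu (by nlinarith [Real.pi_pos])
  have hc : 0 < Real.cos u := Real.cos_pos_of_mem_Ioo ⟨by linarith, hu2⟩
  have hsu : Real.sin u ≤ u := Real.sin_le hu.le
  have h1 : 1 + Real.cot u ^ 2 = 1 / Real.sin u ^ 2 := by
    rw [Real.cot_eq_cos_div_sin]
    field_simp
    exact Real.sin_sq_add_cos_sq u
  have hA : (2:ℝ)^(N:ℝ) ≠ 0 := by positivity
  have hB : (0:ℝ) < (2:ℝ)^r := by positivity
  have hS : (0:ℝ) < (Real.sin u ^ 2)^(N:ℝ) := by positivity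
  have hU : (0:ℝ) < u^((N:ℝ)-r) := by positivity
  have hC : (0:ℝ) < Real.cos u ^ ((N:ℝ)+r) := by positivity
  have hT : (0:ℝ) < Real.sin u ^ ((N:ℝ)+r) := by positivity
  have e1 : (2:ℝ)^(N:ℝ) / (1 + Real.cot u ^ 2)^(N:ℝ) / (2*u)^((N:ℝ)-r)
      = 2^r * ((Real.sin u ^ 2)^(N:ℝ) / u^((N:ℝ)-r)) := by
    rw [h1, one_div, Real.inv_rpow (by positivity), Real.mul_rpow (by norm_num) hu.le,
      Real.rpow_sub (by norm_num : (0:ℝ) < 2)]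
    field_simp
  have e2 : Real.cos u ^ ((N:ℝ)+r) * ((2:ℝ)^r / Real.cot u ^ ((N:ℝ)+r))
      = 2^r * Real.sin u ^ ((N:ℝ)+r) := by
    rw [Real.cot_eq_cos_div_sin, Real.div_rpow hc.le hs.le]
    field_simp
  rw [e1, e2]
  gcongr 2^r * ?_
  rw [div_le_iff₀ hU]
  have e3 : (Real.sin u ^ 2)^(N:ℝ) = Real.sin u ^ (((N:ℝ)+r) + ((N:ℝ)-r)) := by
    rw [← Real.rpow_natCast (Real.sin u) 2, ← Real.rpow_mul hs.le]
    norm_num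
    ring_nf
  rw [e3, Real.rpow_add hs]
  exact mul_le_mul_of_nonneg_left (Real.rpow_le_rpow hs.le hsu (by linarith)) hT.le

end SphAux

namespace SphAux

lemma cot_pos {u : ℝ} (hu : 0 < u) (hu2 : u < Real.pi/2) : 0 < Real.cot u := by
  rw [Real.cot_eq_cos_div_sin]
  have hs : 0 < Real.sin u := Real.sin_pos_of_pos_of_lt_pi hu (by nlinarith [Real.pi_pos])
  have hc : 0 < Real.cos u := Real.cos_pos_of_mem_Ioo ⟨by linarith, hu2⟩
  positivity

lemma pointwise (N : ℕ) (r : ℝ) (hr : r < -(N:ℝ)) (Ω : Set (EuclideanSpace ℝ (Fin N)))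
    {δ : ℝ} (h1 : 0 < δ) (h2 : δ < Real.pi) :
    sphericalVolume N (farBall N (Real.cot (δ/2)) ∩ Ω) / ENNReal.ofReal (δ ^ ((N:ℝ) - r)) ≤
    ENNReal.ofReal (Real.cos (δ/2) ^ ((N:ℝ)+r)) * (ENNReal.ofReal ((2:ℝ)^r) *
      (volume (farBall N (Real.cot (δ/2)) ∩ Ω) /
        ENNReal.ofReal (Real.cot (δ/2) ^ ((N:ℝ)+r)))) := by
  have hu : 0 < δ/2 := by linarith
  have hu2 : δ/2 < Real.pi/2 := by linarith
  have ht : 0 < Real.cot (δ/2) := cot_pos hu hu2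
  have hδpow : (0:ℝ) < δ ^ ((N:ℝ) - r) := by positivity
  have htpow : (0:ℝ) < Real.cot (δ/2) ^ ((N:ℝ) + r) := Real.rpow_pos_of_pos ht _
  have hc : 0 < Real.cos (δ/2) := Real.cos_pos_of_mem_Ioo ⟨by linarith, hu2⟩
  have hcpow : (0:ℝ) ≤ Real.cos (δ/2) ^ ((N:ℝ) + r) := (Real.rpow_pos_of_pos hc _).le
  set V := volume (farBall N (Real.cot (δ/2)) ∩ Ω) with hV
  calc sphericalVolume N (farBall N (Real.cot (δ/2)) ∩ Ω) / ENNReal.ofReal (δ ^ ((N:ℝ) - r))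
      ≤ ENNReal.ofReal ((2:ℝ)^(N:ℝ) / (1 + Real.cot (δ/2)^2)^(N:ℝ)) * V /
        ENNReal.ofReal (δ ^ ((N:ℝ) - r)) := by
        gcongr
        exact sphVol_le N Ω (Real.cot (δ/2)) ht.le
    _ = ENNReal.ofReal ((2:ℝ)^(N:ℝ) / (1 + Real.cot (δ/2)^2)^(N:ℝ) / δ ^ ((N:ℝ) - r)) * V := by
        rw [ENNReal.ofReal_div_of_pos hδpow]
        simp only [div_eq_mul_inv]
        rw [mul_right_comm]
    _ ≤ ENNReal.ofReal (Real.cos (δ/2) ^ ((N:ℝ)+r) * ((2:ℝ)^r / Real.cot (δ/2) ^ ((N:ℝ)+r)))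
        * V := by
        gcongr
        have := keyIneq N r hr hu hu2
        calc (2:ℝ)^(N:ℝ) / (1 + Real.cot (δ/2)^2)^(N:ℝ) / δ ^ ((N:ℝ) - r)
            = (2:ℝ)^(N:ℝ) / (1 + Real.cot (δ/2)^2)^(N:ℝ) / (2*(δ/2)) ^ ((N:ℝ) - r) := by
              rw [show (2:ℝ)*(δ/2) = δ from by ring]
          _ ≤ _ := this
    _ = ENNReal.ofReal (Real.cos (δ/2) ^ ((N:ℝ)+r)) * (ENNReal.ofReal ((2:ℝ)^r) *
        (V / ENNReal.ofReal (Real.cot (δ/2) ^ ((N:ℝ)+r)))) := by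
        rw [ENNReal.ofReal_mul hcpow, ENNReal.ofReal_div_of_pos htpow]
        simp only [div_eq_mul_inv, mul_comm, mul_assoc, mul_left_comm]

end SphAux

namespace SphAux

lemma limsup_map' {α β : Type*} (u : β → ℝ≥0∞) (m : α → β) (f : Filter α) :
    limsup u (Filter.map m f) = limsup (fun x => u (m x)) f := by
  rw [limsup, limsup, Filter.map_map]; rfl

lemma liminf_map' {α β : Type*} (u : β → ℝ≥0∞) (m : α → β) (f : Filter α) :
    liminf u (Filter.map m f) = liminf (fun x => u (m x)) f := by
  rw [liminf, liminf, Filter.map_map]; rfl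

lemma liminf_const_mul' {α : Type*} {f : Filter α} [NeBot f] {u : α → ℝ≥0∞} {a : ℝ≥0∞}
    (ha_top : a ≠ ⊤) : (f.liminf fun x => a * u x) = a * f.liminf u := by
  by_cases ha_zero : a = 0
  · simp only [ha_zero, zero_mul]
    exact liminf_const 0
  let g := fun x : ℝ≥0∞ => a * x
  have hg_bij : Function.Bijective g :=
    Function.bijective_iff_has_inverse.mpr
      ⟨fun x => a⁻¹ * x,
        ⟨fun x => by simp [g, ← mul_assoc, ENNReal.inv_mul_cancel ha_zero ha_top], fun x => by
          simp [g, ← mul_assoc, ENNReal.mul_inv_cancel ha_zero ha_top]⟩⟩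
  have hg_mono : StrictMono g :=
    Monotone.strictMono_of_injective (fun _ _ _ => by rwa [ENNReal.mul_le_mul_iff_right ha_zero ha_top]) hg_bij.1
  let g_iso := StrictMono.orderIsoOfSurjective g hg_mono hg_bij.2
  exact (OrderIso.liminf_apply g_iso).symm

lemma le_of_forall_one_add {A B : ℝ≥0∞}
    (h : ∀ ε : ℝ, 0 < ε → A ≤ ENNReal.ofReal (1+ε) * B) : A ≤ B := by
  refine ENNReal.le_of_forall_pos_le_add fun ε hε hB => ?_
  obtain ⟨b, hb0, rfl⟩ : ∃ b : ℝ, 0 ≤ b ∧ B = ENNReal.ofReal b :=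
    ⟨B.toReal, ENNReal.toReal_nonneg, (ENNReal.ofReal_toReal hB.ne).symm⟩
  have hε' : (0:ℝ) < (ε:ℝ) := hε
  refine (h ((ε:ℝ)/(b+1)) (by positivity)).trans ?_
  have hcoe : ((ε:ℝ≥0):ℝ≥0∞) = ENNReal.ofReal (ε:ℝ) := ENNReal.ofReal_coe_nnreal.symm
  rw [← ENNReal.ofReal_mul (by positivity), hcoe, ← ENNReal.ofReal_add hb0 hε'.le]
  apply ENNReal.ofReal_le_ofReal
  have hble : b/(b+1) ≤ 1 := by rw [div_le_one (by linarith)]; linarith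
  have h1 : (1 + (ε:ℝ)/(b+1)) * b = b + (ε:ℝ) * (b/(b+1)) := by field_simp
  rw [h1]
  nlinarith

lemma tendsto_cot : Tendsto (fun δ : ℝ => Real.cot (δ/2)) (𝓝[>](0:ℝ)) atTop := by
  have h1 : Tendsto (fun δ : ℝ => Real.tan (δ/2)) (𝓝[>](0:ℝ)) (𝓝[>](0:ℝ)) := by
    apply tendsto_nhdsWithin_of_tendsto_nhds_of_eventually_within
    · have hct : ContinuousAt Real.tan ((0:ℝ)/2) := by
        rw [show (0:ℝ)/2 = 0 by norm_num]
        exact Real.continuousAt_tan.mpr (by simp)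
      have : ContinuousAt (fun δ : ℝ => Real.tan (δ/2)) 0 :=
        ContinuousAt.comp (g := Real.tan) (f := fun δ : ℝ => δ/2) (x := 0) hct
          (by fun_prop)
      simpa [Real.tan_zero] using this.tendsto.mono_left nhdsWithin_le_nhds
    · have hπ : ∀ᶠ δ in 𝓝[>](0:ℝ), δ < Real.pi :=
        (gt_mem_nhds Real.pi_pos : ∀ᶠ δ in 𝓝 (0:ℝ), δ < Real.pi).filter_mono nhdsWithin_le_nhds
      filter_upwards [self_mem_nhdsWithin, hπ] with δ h0 h2
      have h0 : (0:ℝ) < δ := h0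
      exact Real.tan_pos_of_pos_of_lt_pi_div_two (by linarith) (by linarith)
  have h2 : ∀ δ : ℝ, Real.cot (δ/2) = (Real.tan (δ/2))⁻¹ := fun δ => by
    rw [Real.cot_eq_cos_div_sin, Real.tan_eq_sin_div_cos, inv_div]
  simp only [h2]
  exact tendsto_inv_nhdsGT_zero.comp h1

lemma tendsto_phi : Tendsto (fun t : ℝ => 2 * Real.arctan t⁻¹) atTop (𝓝[>](0:ℝ)) := by
  apply tendsto_nhdsWithin_of_tendsto_nhds_of_eventually_within
  · have h2 : Tendsto (fun t : ℝ => Real.arctan t⁻¹) atTop (𝓝 (Real.arctan 0)) :=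
      (Real.continuous_arctan.tendsto 0).comp tendsto_inv_atTop_zero
    have := tendsto_const_nhds.mul h2 (f := fun _ : ℝ => (2:ℝ))
    simpa [Real.arctan_zero] using this
  · filter_upwards [eventually_gt_atTop (0:ℝ)] with t ht
    have h3 : 0 < Real.arctan t⁻¹ := by
      rw [← Real.arctan_zero]
      exact Real.arctan_strictMono (by positivity)
    exact mem_Ioi.mpr (by linarith)

lemma tendsto_cosrpow (c : ℝ) :
    Tendsto (fun δ : ℝ => Real.cos (δ/2) ^ c) (𝓝[>](0:ℝ)) (𝓝 1) := by
  have h : ContinuousAt (fun δ : ℝ => Real.cos (δ/2) ^ c) 0 := by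
    apply ContinuousAt.rpow_const
    · exact (Real.continuous_cos.comp (continuous_id.div_const 2)).continuousAt
    · left; simp
  have := h.tendsto.mono_left (nhdsWithin_le_nhds (s := Ioi (0:ℝ)))
  simpa [Real.one_rpow] using this

end SphAux

theorem spherical_content_upper_bounds
    (N : ℕ) (Ω : Set (EuclideanSpace ℝ (Fin N))) (hΩ : MeasurableSet Ω)
    (hfin : volume Ω < ⊤) (r : ℝ) (hr : r < -(N : ℝ)) :
    upperSphericalContent N Ω r ≤ ENNReal.ofReal ((2 : ℝ) ^ r) * upperContent N Ω r ∧
    lowerSphericalContent N Ω r ≤ ENNReal.ofReal ((2 : ℝ) ^ r) * lowerContent N Ω r := by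
  have h2r : (0:ℝ) < (2:ℝ)^r := by positivity
  set H : ℝ → ℝ≥0∞ := fun t =>
    volume (farBall N t ∩ Ω) / ENNReal.ofReal (t ^ ((N:ℝ) + r)) with hH
  set F : ℝ → ℝ≥0∞ := fun δ =>
    sphericalVolume N (farBall N (Real.cot (δ/2)) ∩ Ω) / ENNReal.ofReal (δ ^ ((N:ℝ) - r)) with hF
  have main : ∀ ε : ℝ, 0 < ε →
      limsup F (𝓝[>](0:ℝ)) ≤ ENNReal.ofReal ((1+ε) * 2^r) * limsup H atTop ∧
      liminf F (𝓝[>](0:ℝ)) ≤ ENNReal.ofReal ((1+ε) * 2^r) * liminf H atTop := by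
    intro ε hε
    set c : ℝ≥0∞ := ENNReal.ofReal ((1+ε) * 2^r) with hc
    have hev : ∀ᶠ δ in 𝓝[>](0:ℝ), F δ ≤ c * H (Real.cot (δ/2)) := by
      have hcos := (SphAux.tendsto_cosrpow ((N:ℝ)+r)).eventually_le_const
        (by linarith : (1:ℝ) < 1+ε)
      have hπ : ∀ᶠ δ in 𝓝[>](0:ℝ), δ < Real.pi :=
        (gt_mem_nhds Real.pi_pos : ∀ᶠ δ in 𝓝 (0:ℝ), δ < Real.pi).filter_mono nhdsWithin_le_nhds
      filter_upwards [hcos, self_mem_nhdsWithin, hπ] with δ hδcos hδ0' hδπ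
      have hδ0 : (0:ℝ) < δ := hδ0'
      refine (SphAux.pointwise N r hr Ω hδ0 hδπ).trans ?_
      rw [hc, ENNReal.ofReal_mul (by linarith), mul_assoc]
      exact mul_le_mul_left (ENNReal.ofReal_le_ofReal hδcos) _
    constructor
    · calc limsup F (𝓝[>](0:ℝ))
          ≤ limsup (fun δ : ℝ => c * H (Real.cot (δ/2))) (𝓝[>](0:ℝ)) := limsup_le_limsup hev
        _ = limsup (fun t => c * H t)
            (Filter.map (fun δ : ℝ => Real.cot (δ/2)) (𝓝[>](0:ℝ))) :=
            (SphAux.limsup_map' (fun t => c * H t) (fun δ : ℝ => Real.cot (δ/2)) _).symm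
        _ ≤ limsup (fun t => c * H t) atTop := limsup_le_limsup_of_le SphAux.tendsto_cot
        _ = c * limsup H atTop := ENNReal.limsup_const_mul_of_ne_top ENNReal.ofReal_ne_top
    · calc liminf F (𝓝[>](0:ℝ))
          ≤ liminf F (Filter.map (fun t : ℝ => 2 * Real.arctan t⁻¹) atTop) :=
            liminf_le_liminf_of_le SphAux.tendsto_phi
        _ = liminf (fun t : ℝ => F (2 * Real.arctan t⁻¹)) atTop :=
            SphAux.liminf_map' F (fun t : ℝ => 2 * Real.arctan t⁻¹) _
        _ ≤ liminf (fun t => c * H t) atTop := by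
            have hev2 : ∀ᶠ t : ℝ in atTop, F (2 * Real.arctan t⁻¹) ≤
                c * H (Real.cot ((2 * Real.arctan t⁻¹)/2)) := SphAux.tendsto_phi.eventually hev
            have hev3 : ∀ᶠ t : ℝ in atTop, F (2 * Real.arctan t⁻¹) ≤ c * H t := by
              filter_upwards [hev2, eventually_gt_atTop (0:ℝ)] with t h1 h2
              have htan := Real.tan_arctan t⁻¹
              rw [Real.tan_eq_sin_div_cos] at htan
              have hcot : Real.cot ((2 * Real.arctan t⁻¹)/2) = t := by
                rw [show (2 * Real.arctan t⁻¹)/2 = Real.arctan t⁻¹ by ring,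
                  Real.cot_eq_cos_div_sin, ← inv_div, htan, inv_inv]
              rwa [hcot] at h1
            exact liminf_le_liminf hev3
        _ = c * liminf H atTop := SphAux.liminf_const_mul' ENNReal.ofReal_ne_top
  constructor
  · show limsup F (𝓝[>](0:ℝ)) ≤ ENNReal.ofReal ((2:ℝ)^r) * limsup H atTop
    apply SphAux.le_of_forall_one_add
    intro ε hε
    refine ((main ε hε).1).trans ?_
    rw [ENNReal.ofReal_mul (by linarith : (0:ℝ) ≤ 1+ε), mul_assoc]
  · show liminf F (𝓝[>](0:ℝ)) ≤ ENNReal.ofReal ((2:ℝ)^r) * liminf H atTop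
    apply SphAux.le_of_forall_one_add
    intro ε hε
    refine ((main ε hε).2).trans ?_
    rw [ENNReal.ofReal_mul (by linarith : (0:ℝ) ≤ 1+ε), mul_assoc]
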